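/- With notation as in the setup of the cycle Ω_m: if {σ, τ} is an unordered pair of disjoint simplices of D_m^C(Δ) with dim σ + dim τ = d + δ and vertex Δ ⊆ p(vertex σ) ∪ p(vertex τ), then both p(σ) and p(τ) are d-dimensional simplices of L (i.e., they each have exactly d+1 vertices). -/
import Mathlib


/-- An abstract simplicial complex on a vertex type `V`. -/
structure AbstractComplex (V : Type*) where
  faces : Set (Finset V)
  nonempty_of_mem : ∀ {s : Finset V}, s ∈ faces → s.Nonempty
  down_closed : ∀ {s t : Finset V}, s ∈ faces → t ⊆ s → t.Nonempty → t ∈ faces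

/-- `L` is `d`-dimensional. -/
def AbstractComplex.IsDimension {V : Type*} (L : AbstractComplex V) (d : ℕ) : Prop :=
  (∀ s ∈ L.faces, s.card ≤ d + 1) ∧ ∃ s ∈ L.faces, s.card = d + 1

/-- `L` is a flag complex: any finite set of pairwise adjacent vertices spans a simplex. -/
def AbstractComplex.Flag {V : Type*} [DecidableEq V] (L : AbstractComplex V) : Prop :=
  ∀ s : Finset V, s.Nonempty →
    (∀ v ∈ s, ∀ w ∈ s, v ≠ w → ({v, w} : Finset V) ∈ L.faces) → s ∈ L.faces

/-- `C` is the support of a nonzero mod-2 `d`-cycle of `L`: a nonempty set of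
`d`-simplices of `L` such that every `(d-1)`-simplex is a face of an even number of
members of `C`. -/
def IsCycleSupport {V : Type*} [DecidableEq V] (L : AbstractComplex V) (d : ℕ)
    (C : Finset (Finset V)) : Prop :=
  C.Nonempty ∧ (∀ s ∈ C, s ∈ L.faces ∧ s.card = d + 1) ∧
    ∀ t : Finset V, t.card = d → Even ((C.filter fun s => t ⊆ s).card)

/-- The faces of `D_m^C(Δ)`: the full subcomplex of the polyhedral join
`O_m L = ∗_L ∂Δ^m` on the vertex set `(vertex C) × {0} ∪ (vertex Δ) × Fin (m+1)`, i.e.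
one point of the `(m-1)`-sphere over every vertex of `C`, together with the whole sphere
(the boundary of an `m`-simplex, with `m+1` vertices) over every vertex of `Δ`.  A simplex
is a nonempty set `F` of such vertices whose projection `p(F)` to `L` is a simplex of `L`
and whose fiber over each vertex of `L` is a proper subset of the corresponding sphere. -/
def DFaces {V : Type*} [DecidableEq V] (L : AbstractComplex V) (m : ℕ)
    (C : Finset (Finset V)) (Δ : Finset V) : Set (Finset (V × Fin (m + 1))) :=
  {F | F.Nonempty ∧ F.image Prod.fst ∈ L.faces ∧
    (∀ q ∈ F, q.1 ∈ Δ ∨ (q.2 = 0 ∧ ∃ s ∈ C, q.1 ∈ s)) ∧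
    ∀ v : V, (F.filter fun q => q.1 = v).card ≤ m}

/-- With notation as in the setup of the cycle `Ω_m`: if `{σ, τ}` is a
pair of disjoint simplices of `D_m^C(Δ)` with `dim σ + dim τ = d + δ` (i.e.
`card σ + card τ = (m+1)(d+1)`) and `vertex Δ ⊆ p(vertex σ) ∪ p(vertex τ)`, then both
`p(σ)` and `p(τ)` are `d`-dimensional simplices of `L`, i.e. each has exactly `d+1`
vertices. -/
theorem stmt_8 {V : Type} [Fintype V] [DecidableEq V]
    (L : AbstractComplex V) (d m : ℕ) (hm : 1 ≤ m)
    (hflag : L.Flag) (hdim : L.IsDimension d)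
    (C : Finset (Finset V)) (hC : IsCycleSupport L d C)
    (Δ : Finset V) (hΔ : Δ ∈ C)
    (σ τ : Finset (V × Fin (m + 1)))
    (hσ : σ ∈ DFaces L m C Δ) (hτ : τ ∈ DFaces L m C Δ)
    (hdisj : Disjoint σ τ)
    (hcard : σ.card + τ.card = (m + 1) * (d + 1))
    (hΔsub : Δ ⊆ (σ ∪ τ).image Prod.fst) :
    (σ.image Prod.fst).card = d + 1 ∧ (τ.image Prod.fst).card = d + 1 ∧
      σ.image Prod.fst ∈ L.faces ∧ τ.image Prod.fst ∈ L.faces := by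

  classical
  obtain ⟨hσne, hσface, hσvert, hσfib⟩ := hσ
  obtain ⟨hτne, hτface, hτvert, hτfib⟩ := hτ
  have hΔcard : Δ.card = d + 1 := (hC.2.1 Δ hΔ).2
  set pσ := σ.image Prod.fst with hpσdef
  set pτ := τ.image Prod.fst with hpτdef
  have hpσle : pσ.card ≤ d + 1 := hdim.1 _ hσface
  have hpτle : pτ.card ≤ d + 1 := hdim.1 _ hτface
  suffices key : d + 1 + (d + 1) ≤ pσ.card + pτ.card by
    exact ⟨by omega, by omega, hσface, hτface⟩
  -- notation for fibers
  set nσ : V → ℕ := fun v => (σ.filter fun q => q.1 = v).card with hnσdef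
  set nτ : V → ℕ := fun v => (τ.filter fun q => q.1 = v).card with hnτdef
  have hdisjfil : ∀ v : V, Disjoint (σ.filter fun q => q.1 = v) (τ.filter fun q => q.1 = v) :=
    fun v => hdisj.mono (Finset.filter_subset _ _) (Finset.filter_subset _ _)
  have hsum_eq_union : ∀ v : V, nσ v + nτ v
      = ((σ.filter fun q => q.1 = v) ∪ (τ.filter fun q => q.1 = v)).card :=
    fun v => (Finset.card_union_of_disjoint (hdisjfil v)).symm
  -- combined fiber over any vertex has at most m+1 points
  have hle_m1 : ∀ v : V, nσ v + nτ v ≤ m + 1 := by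
    intro v
    rw [hsum_eq_union v]
    have hinj : Set.InjOn Prod.snd
        (((σ.filter fun q => q.1 = v) ∪ (τ.filter fun q => q.1 = v) : Finset (V × Fin (m+1))) : Set (V × Fin (m+1))) := by
      intro a ha b hb hsnd
      simp only [Finset.coe_union, Set.mem_union, Finset.mem_coe, Finset.mem_filter] at ha hb
      have ha1 : a.1 = v := by rcases ha with h | h <;> exact h.2
      have hb1 : b.1 = v := by rcases hb with h | h <;> exact h.2
      exact Prod.ext (ha1.trans hb1.symm) hsnd
    calc ((σ.filter fun q => q.1 = v) ∪ (τ.filter fun q => q.1 = v)).card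
        ≤ (Finset.univ : Finset (Fin (m+1))).card :=
          Finset.card_le_card_of_injOn Prod.snd (fun a _ => Finset.mem_univ _) hinj
      _ = m + 1 := by simp
  -- combined fiber over a vertex outside Δ has at most one point
  have hoff : ∀ v : V, v ∉ Δ → nσ v + nτ v ≤ 1 := by
    intro v hv
    rw [hsum_eq_union v]
    refine Finset.card_le_one.mpr ?_
    have hval : ∀ q ∈ (σ.filter fun q => q.1 = v) ∪ (τ.filter fun q => q.1 = v),
        q = (v, (0 : Fin (m+1))) := by
      intro q hq
      rcases Finset.mem_union.1 hq with h | h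
      · obtain ⟨hqσ, hq1⟩ := Finset.mem_filter.1 h
        rcases hσvert q hqσ with h' | h'
        · exact absurd (by rwa [hq1] at h') hv
        · exact Prod.ext hq1 h'.1
      · obtain ⟨hqτ, hq1⟩ := Finset.mem_filter.1 h
        rcases hτvert q hqτ with h' | h'
        · exact absurd (by rwa [hq1] at h') hv
        · exact Prod.ext hq1 h'.1
    intro a ha b hb
    rw [hval a ha, hval b hb]
  -- fiber is empty over vertices not in the image
  have hzeroσ : ∀ v : V, v ∉ pσ → nσ v = 0 := by
    intro v hv
    rw [hnσdef]
    rw [Finset.card_eq_zero, Finset.filter_eq_empty_iff]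
    intro q hq h1
    exact hv (Finset.mem_image.2 ⟨q, hq, h1⟩)
  have hzeroτ : ∀ v : V, v ∉ pτ → nτ v = 0 := by
    intro v hv
    rw [hnτdef]
    rw [Finset.card_eq_zero, Finset.filter_eq_empty_iff]
    intro q hq h1
    exact hv (Finset.mem_image.2 ⟨q, hq, h1⟩)
  -- the refined per-vertex bound over Δ
  have hΔb : ∀ w ∈ Δ, nσ w + nτ w ≤ m + (if w ∈ pσ ∩ pτ then 1 else 0) := by
    intro w _
    by_cases hw : w ∈ pσ ∩ pτ
    · simp only [hw, if_true]
      exact hle_m1 w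
    · simp only [hw, if_false]
      rw [Finset.mem_inter] at hw
      push_neg at hw
      by_cases hwσ : w ∈ pσ
      · have h0 : nτ w = 0 := hzeroτ w (hw hwσ)
        have h1 : nσ w ≤ m := hσfib w
        omega
      · have h0 : nσ w = 0 := hzeroσ w hwσ
        have h1 : nτ w ≤ m := hτfib w
        omega
  -- the ambient vertex set
  set T : Finset V := (Δ ∪ pσ) ∪ pτ with hTdef
  have hΔT : Δ ⊆ T := by
    intro v hv
    simp [hTdef, Finset.mem_union, hv]
  have hσsum : σ.card = ∑ v ∈ T, nσ v :=
    Finset.card_eq_sum_card_fiberwise (fun q hq => by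
      have : q.1 ∈ pσ := Finset.mem_image.2 ⟨q, hq, rfl⟩
      simp [hTdef, Finset.mem_union, this])
  have hτsum : τ.card = ∑ v ∈ T, nτ v :=
    Finset.card_eq_sum_card_fiberwise (fun q hq => by
      have : q.1 ∈ pτ := Finset.mem_image.2 ⟨q, hq, rfl⟩
      simp [hTdef, Finset.mem_union, this])
  have hsplitσ : ∑ v ∈ T \ Δ, nσ v + ∑ v ∈ Δ, nσ v = ∑ v ∈ T, nσ v :=
    Finset.sum_sdiff hΔT
  have hsplitτ : ∑ v ∈ T \ Δ, nτ v + ∑ v ∈ Δ, nτ v = ∑ v ∈ T, nτ v :=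
    Finset.sum_sdiff hΔT
  -- inner sum bound
  set k : ℕ := (Δ ∩ (pσ ∩ pτ)).card with hkdef
  have hSin : ∑ w ∈ Δ, (nσ w + nτ w) ≤ m * (d + 1) + k := by
    calc ∑ w ∈ Δ, (nσ w + nτ w)
        ≤ ∑ w ∈ Δ, (m + if w ∈ pσ ∩ pτ then 1 else 0) := Finset.sum_le_sum hΔb
      _ = m * Δ.card + (Δ.filter fun w => w ∈ pσ ∩ pτ).card := by
          rw [Finset.sum_add_distrib, Finset.sum_const, smul_eq_mul, mul_comm]
          congr 1
          rw [Finset.sum_boole]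
          simp
      _ = m * (d + 1) + k := by
          rw [hΔcard, hkdef, Finset.filter_mem_eq_inter]
  -- outer sum bound
  have hSout : ∑ v ∈ T \ Δ, (nσ v + nτ v) ≤ (pσ \ Δ).card + (pτ \ Δ).card := by
    calc ∑ v ∈ T \ Δ, (nσ v + nτ v)
        ≤ ∑ _v ∈ T \ Δ, 1 :=
          Finset.sum_le_sum (fun v hv => hoff v (Finset.mem_sdiff.1 hv).2)
      _ = (T \ Δ).card := by simp
      _ ≤ ((pσ \ Δ) ∪ (pτ \ Δ)).card := by
          refine Finset.card_le_card ?_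
          intro v hv
          obtain ⟨hvT, hvΔ⟩ := Finset.mem_sdiff.1 hv
          simp only [hTdef, Finset.mem_union] at hvT
          rcases hvT with (h | h) | h
          · exact absurd h hvΔ
          · exact Finset.mem_union.2 (Or.inl (Finset.mem_sdiff.2 ⟨h, hvΔ⟩))
          · exact Finset.mem_union.2 (Or.inr (Finset.mem_sdiff.2 ⟨h, hvΔ⟩))
      _ ≤ (pσ \ Δ).card + (pτ \ Δ).card := Finset.card_union_le _ _
  -- inclusion-exclusion over Δ using the covering hypothesis
  have hcoverset : (Δ ∩ pσ) ∪ (Δ ∩ pτ) = Δ := by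
    have hsub : Δ ⊆ pσ ∪ pτ := by
      intro w hw
      have := hΔsub hw
      rwa [Finset.image_union] at this
    rw [← Finset.inter_union_distrib_left]
    exact Finset.inter_eq_left.2 hsub
  have hE4 : Δ.card + k = (Δ ∩ pσ).card + (Δ ∩ pτ).card := by
    have h := Finset.card_union_add_card_inter (Δ ∩ pσ) (Δ ∩ pτ)
    rw [hcoverset] at h
    have heq : (Δ ∩ pσ) ∩ (Δ ∩ pτ) = Δ ∩ (pσ ∩ pτ) := by
      ext w
      simp only [Finset.mem_inter]
      tauto
    rw [heq] at h
    exact h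
  have hE5σ : (Δ ∩ pσ).card + (pσ \ Δ).card = pσ.card := by
    rw [Finset.inter_comm]
    exact Finset.card_inter_add_card_sdiff pσ Δ
  have hE5τ : (Δ ∩ pτ).card + (pτ \ Δ).card = pτ.card := by
    rw [Finset.inter_comm]
    exact Finset.card_inter_add_card_sdiff pτ Δ
  -- assemble
  have htotal : ∑ w ∈ Δ, (nσ w + nτ w) + ∑ v ∈ T \ Δ, (nσ v + nτ v)
      = (m + 1) * (d + 1) := by
    rw [Finset.sum_add_distrib, Finset.sum_add_distrib]
    rw [← hcard, hσsum, hτsum, ← hsplitσ, ← hsplitτ]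
    ring
  have hexp : (m + 1) * (d + 1) = m * (d + 1) + (d + 1) := by ring
  rw [hexp] at htotal
  omega
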